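/- arXiv:1212.0398 — 3 statements merged into one kernel-verified Lean document; each statement's English description precedes it below -/
import Mathlib

section
/- (Stationary distribution from traffic solution) Consider a self-reacting system with rate q(x,x') = ∑_{u,u',y} q_d^u(x,y)·r(u,y,u')·p_a^{u'}(y,x') + q_i(x,x') on finite S, whose stationary distribution π satisfies the departure-balance condition ∑_{x'} π(x')·q_d^u(x',y) = ν(u,y) where ν solves the traffic equation, and assume the internal transitions satisfy π(x)·q_i(x,x') = π(x')·q_i(x',x) summed appropriately, i.e., ∑_{x'} π(x')·q_i(x',x) = b(x)·π(x) with b(x) = ∑_{x'} q_i(x,x') < a(x) = ∑_{x'} q(x,x'). Then π(x) = (1/(a(x) - b(x)))·∑_y ∑_u ν(u,y)·p_a^u(y,x) for all x ∈ S. -/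
theorem stmt_17 {S T : Type*} [Fintype S] [Fintype T]
    (qd : T → S → S → ℝ) (r : T → S → T → ℝ) (pa : T → S → S → ℝ)
    (qi : S → S → ℝ)
    (hr1 : ∀ u y, ∑ u', r u y u' = 1) (hpa1 : ∀ u y, ∑ x', pa u y x' = 1)
    (q : S → S → ℝ)
    (hq : ∀ x x', q x x' = (∑ u, ∑ u', ∑ y, qd u x y * r u y u' * pa u' y x') + qi x x')
    (a b : S → ℝ) (ha : ∀ x, a x = ∑ x', q x x') (hb : ∀ x, b x = ∑ x', qi x x')
    (hba : ∀ x, b x < a x)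
    (ν : T → S → ℝ) (htraffic : ∀ u y, ∑ u', ν u' y * r u' y u = ν u y)
    (π : S → ℝ)
    (hstat : ∀ x, a x * π x = ∑ x', π x' * q x' x)
    (hdep : ∀ u y, ∑ x', π x' * qd u x' y = ν u y)
    (hint : ∀ x, ∑ x', π x' * qi x' x = b x * π x) :
    ∀ x, π x = (1 / (a x - b x)) * ∑ y, ∑ u, ν u y * pa u y x := by
  intro x
  have hne : a x - b x ≠ 0 := sub_ne_zero.mpr (hba x).ne'
  have key : (a x - b x) * π x = ∑ y, ∑ u, ν u y * pa u y x := by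
    have h1 : a x * π x =
        (∑ x', π x' * ∑ u, ∑ u', ∑ y, qd u x' y * r u y u' * pa u' y x)
          + ∑ x', π x' * qi x' x := by
      rw [hstat x, ← Finset.sum_add_distrib]
      refine Finset.sum_congr rfl fun x' _ => ?_
      rw [hq x' x, mul_add]
    have h2 : (∑ x', π x' * ∑ u, ∑ u', ∑ y, qd u x' y * r u y u' * pa u' y x)
        = ∑ y, ∑ u, ν u y * pa u y x := by
      calc (∑ x', π x' * ∑ u, ∑ u', ∑ y, qd u x' y * r u y u' * pa u' y x)
          = ∑ u, ∑ u', ∑ y, (∑ x', π x' * qd u x' y) * (r u y u' * pa u' y x) := by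
            simp only [Finset.mul_sum, Finset.sum_mul]
            rw [Finset.sum_comm]
            refine Finset.sum_congr rfl fun u _ => ?_
            rw [Finset.sum_comm]
            refine Finset.sum_congr rfl fun u' _ => ?_
            rw [Finset.sum_comm]
            refine Finset.sum_congr rfl fun y _ => ?_
            refine Finset.sum_congr rfl fun x' _ => ?_
            ring
        _ = ∑ u, ∑ u', ∑ y, ν u y * r u y u' * pa u' y x := by
            refine Finset.sum_congr rfl fun u _ => Finset.sum_congr rfl fun u' _ =>
              Finset.sum_congr rfl fun y _ => ?_
            rw [hdep u y]; ring
        _ = ∑ y, ∑ u', (∑ u, ν u y * r u y u') * pa u' y x := by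
            simp only [Finset.sum_mul]
            calc (∑ u : T, ∑ u' : T, ∑ y : S, ν u y * r u y u' * pa u' y x)
                = ∑ u' : T, ∑ u : T, ∑ y : S, ν u y * r u y u' * pa u' y x :=
                  Finset.sum_comm
              _ = ∑ u' : T, ∑ y : S, ∑ u : T, ν u y * r u y u' * pa u' y x :=
                  Finset.sum_congr rfl fun _ _ => Finset.sum_comm
              _ = ∑ y : S, ∑ u' : T, ∑ u : T, ν u y * r u y u' * pa u' y x :=
                  Finset.sum_comm
        _ = ∑ y, ∑ u, ν u y * pa u y x := by
            refine Finset.sum_congr rfl fun y _ => Finset.sum_congr rfl fun u _ => ?_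
            rw [htraffic u y]
    have := h1
    rw [h2, hint x] at this
    linarith
  field_simp
  linarith [key]
end

section
/- (Product form for two independent quasi-reversible nodes in tandem) Let S₁, S₂ be finite state spaces with rate functions q₁ on S₁ and q₂ on S₂, each having stationary distribution π₁, π₂ respectively (all values positive), where q₁ = λ·p_a^{(1)} + q_d^{(1)}, q₂ = β·p_a^{(2)} + q_d^{(2)}, node 1 is quasi-reversible with departure rate β (∑_{x₁'} π₁(x₁')·q_d^{(1)}(x₁',x₁) = β·π₁(x₁)), and node 2 receives the departures of node 1 as arrivals. Then the product measure π(x₁,x₂) = π₁(x₁)·π₂(x₂) satisfies the global balance equation for the joint rate function q((x₁,x₂),(x₁',x₂')) = λ·p_a^{(1)}(x₁,x₁')·1(x₂'=x₂) + q_d^{(1)}(x₁,x₁')·p_a^{(2)}(x₂,x₂') + q_d^{(2)}(x₂,x₂')·1(x₁'=x₁). -/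
theorem stmt_18 {S1 S2 : Type*} [Fintype S1] [Fintype S2] [DecidableEq S1] [DecidableEq S2]
    (lam β : ℝ) (hlam : 0 < lam) (hβ : 0 < β)
    (pa1 : S1 → S1 → ℝ) (pa2 : S2 → S2 → ℝ)
    (hpa1n : ∀ x x', 0 ≤ pa1 x x') (hpa2n : ∀ x x', 0 ≤ pa2 x x')
    (hpa1 : ∀ x, ∑ x', pa1 x x' = 1) (hpa2 : ∀ x, ∑ x', pa2 x x' = 1)
    (qd1 : S1 → S1 → ℝ) (qd2 : S2 → S2 → ℝ)
    (hqd1 : ∀ x x', 0 ≤ qd1 x x') (hqd2 : ∀ x x', 0 ≤ qd2 x x')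
    (π1 : S1 → ℝ) (π2 : S2 → ℝ) (hπ1 : ∀ x, 0 < π1 x) (hπ2 : ∀ x, 0 < π2 x)
    (hstat1 : ∀ x, (∑ y, (lam * pa1 x y + qd1 x y)) * π1 x
        = ∑ y, π1 y * (lam * pa1 y x + qd1 y x))
    (hstat2 : ∀ x, (∑ y, (β * pa2 x y + qd2 x y)) * π2 x
        = ∑ y, π2 y * (β * pa2 y x + qd2 y x))
    (hqr : ∀ x, ∑ y, π1 y * qd1 y x = β * π1 x)
    (q : S1 × S2 → S1 × S2 → ℝ)
    (hq : ∀ x x', q x x' = lam * pa1 x.1 x'.1 * (if x'.2 = x.2 then 1 else 0)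
        + qd1 x.1 x'.1 * pa2 x.2 x'.2
        + qd2 x.2 x'.2 * (if x'.1 = x.1 then 1 else 0)) :
    ∀ x : S1 × S2, (∑ y, q x y) * (π1 x.1 * π2 x.2)
      = ∑ y, (π1 y.1 * π2 y.2) * q y x := by
  rintro ⟨x1, x2⟩
  have e1 := hstat1 x1
  have e2 := hstat2 x2
  have e3 := hqr x1
  simp only [Finset.sum_add_distrib, ← Finset.mul_sum, hpa1, hpa2, mul_one] at e1 e2
  have hE1 : ∑ y, π1 y * (lam * pa1 y x1 + qd1 y x1)
      = lam * (∑ y, π1 y * pa1 y x1) + ∑ y, π1 y * qd1 y x1 := by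
    rw [Finset.mul_sum, ← Finset.sum_add_distrib]
    exact Finset.sum_congr rfl fun _ _ => by ring
  have hE2 : ∑ y, π2 y * (β * pa2 y x2 + qd2 y x2)
      = β * (∑ y, π2 y * pa2 y x2) + ∑ y, π2 y * qd2 y x2 := by
    rw [Finset.mul_sum, ← Finset.sum_add_distrib]
    exact Finset.sum_congr rfl fun _ _ => by ring
  rw [hE1] at e1
  rw [hE2] at e2
  simp only [hq, Fintype.sum_prod_type, Finset.sum_add_distrib, ← Finset.sum_mul,
    ← Finset.mul_sum, Finset.sum_ite_eq', Finset.mem_univ, if_true, hpa1, hpa2, mul_one]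
  simp only [Finset.sum_ite_irrel, Finset.sum_const_zero, mul_ite, ite_mul, mul_one,
    mul_zero, one_mul, zero_mul, Finset.sum_ite_eq, Finset.sum_ite_eq', Finset.mem_univ,
    if_true, mul_add, add_mul, Finset.sum_add_distrib]
  have hA : ∑ x, π1 x * π2 x2 * (lam * pa1 x x1)
      = lam * (∑ x, π1 x * pa1 x x1) * π2 x2 := by
    rw [Finset.mul_sum, Finset.sum_mul]
    exact Finset.sum_congr rfl fun _ _ => by ring
  have hB : ∑ x : S1, ∑ x_1 : S2, π1 x * π2 x_1 * (qd1 x x1 * pa2 x_1 x2)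
      = (∑ x, π1 x * qd1 x x1) * (∑ x_1, π2 x_1 * pa2 x_1 x2) := by
    rw [Finset.sum_mul_sum]
    exact Finset.sum_congr rfl fun _ _ => Finset.sum_congr rfl fun _ _ => by ring
  have hC : ∑ x, π1 x1 * π2 x * qd2 x x2 = π1 x1 * ∑ x, π2 x * qd2 x x2 := by
    rw [Finset.mul_sum]
    exact Finset.sum_congr rfl fun _ _ => by ring
  rw [hA, hB, hC]
  linear_combination (π2 x2) * e1 + (π1 x1) * e2 + (π2 x2 - ∑ y, π2 y * pa2 y x2) * e3
end

section
/- (Whittle network stationary measure) Let S = ℤ≥0ⁿ. Suppose q_d(x, x-u⁺, u) = Ψ(x-u⁺)/Φ(x)·1(x - u⁺ ∈ S) for positive functions Ψ, Φ on S, routing transfers u to u' with probability r(u,u') (state independent, ∑_{u'} r(u,u') = 1), arrivals satisfy p_a(u', y, x) = 1(x = y + (u')⁺), and internal transitions vanish. If ν(u) = ∏_i w_i^{u_i} solves the traffic equation ∑_{u'} ν(u')·r(u',u) = ν(u), then the measure π(x) = Φ(x)·∏_{i=1}^n w_i^{x_i} satisfies, for each x ∈ S, the global balance equation a(x)·π(x)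 = ∑_{x'} π(x')·q(x',x) with q(x,x') = ∑_{u,u'} q_d(x, x-u⁺, u)·r(u,u')·1(x' = x - u⁺ + (u')⁺) and a(x) = ∑_{x'} q(x,x'), restricted to the case where the index set T of batch types is finite. -/
lemma aux_tsum_single {α : Type} [DecidableEq α] (c : α → ℝ) (g : α)
    (h : ∀ y, y ≠ g → c y = 0) : ∑' y, c y = c g :=
  tsum_eq_single g h

lemma aux_summable_single {α : Type} [DecidableEq α] (c : α → ℝ) (g : α)
    (h : ∀ y, y ≠ g → c y = 0) : Summable c :=
  summable_of_ne_finset_zero (s := {g}) (fun y hy => h y (by simpa using hy))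

theorem stmt_19 (n : ℕ) (hn : 1 ≤ n) (T : Finset (Fin (n + 1) → ℕ))
    (r : (Fin (n + 1) → ℕ) → (Fin (n + 1) → ℕ) → ℝ)
    (hr0 : ∀ u u', 0 ≤ r u u') (hr1 : ∀ u ∈ T, ∑ u' ∈ T, r u u' = 1)
    (hrsize : ∀ u u', 0 < r u u' → ∑ k, u k = ∑ k, u' k)
    (w : Fin n → ℝ) (hw : ∀ i, 0 < w i)
    (ν : (Fin (n + 1) → ℕ) → ℝ) (hν : ∀ u, ν u = ∏ i, w i ^ u i.succ)
    (htraffic : ∀ u ∈ T, ∑ u' ∈ T, ν u' * r u' u = ν u)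
    (Φ : (Fin n → ℕ) → ℝ) (hΦ : ∀ x, 0 < Φ x)
    (up : (Fin (n + 1) → ℕ) → (Fin n → ℕ)) (hup : ∀ u i, up u i = u i.succ)
    (qd : (Fin n → ℕ) → (Fin (n + 1) → ℕ) → ℝ)
    (hqd : ∀ x u, qd x u =
      if ∀ i, up u i ≤ x i then Φ (fun i => x i - up u i) / Φ x else 0)
    (q : (Fin n → ℕ) → (Fin n → ℕ) → ℝ)
    (hq : ∀ x x', q x x' = ∑ u ∈ T, ∑ u' ∈ T,
      qd x u * r u u' * (if x' = fun i => x i - up u i + up u' i then 1 else 0))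
    (a : (Fin n → ℕ) → ℝ) (ha : ∀ x, a x = ∑' x', q x x')
    (π : (Fin n → ℕ) → ℝ) (hπ : ∀ x, π x = Φ x * ∏ i, w i ^ x i) :
    ∀ x, a x * π x = ∑' x', π x' * q x' x := by
  intro x
  have hν' : ∀ u, ν u = ∏ i, w i ^ up u i := by
    intro u; rw [hν]; exact Finset.prod_congr rfl (fun i _ => by rw [hup])
  have hνpos : ∀ u, 0 < ν u := fun u => by
    rw [hν]; exact Finset.prod_pos (fun i _ => pow_pos (hw i) _)
  -- Step A : a x = ∑ u ∈ T, qd x u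
  have hA : a x = ∑ u ∈ T, qd x u := by
    rw [ha]
    have hz : ∀ u u' (x' : Fin n → ℕ),
        x' ≠ (fun i => x i - up u i + up u' i) →
        qd x u * r u u' * (if x' = fun i => x i - up u i + up u' i then 1 else 0) = 0 := by
      intro u u' x' hne; rw [if_neg hne]; ring
    calc ∑' x', q x x'
        = ∑' x', ∑ u ∈ T, ∑ u' ∈ T, qd x u * r u u' *
            (if x' = fun i => x i - up u i + up u' i then 1 else 0) := tsum_congr (hq x)
      _ = ∑ u ∈ T, ∑ u' ∈ T, qd x u * r u u' := by
          rw [Summable.tsum_finsetSum (fun u _ => summable_sum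
            (fun u' _ => aux_summable_single _ _ (hz u u')))]
          refine Finset.sum_congr rfl fun u _ => ?_
          rw [Summable.tsum_finsetSum (fun u' _ => aux_summable_single _ _ (hz u u'))]
          refine Finset.sum_congr rfl fun u' _ => ?_
          rw [aux_tsum_single _ _ (hz u u'), if_pos rfl, mul_one]
      _ = ∑ u ∈ T, qd x u := by
          refine Finset.sum_congr rfl fun u hu => ?_
          rw [← Finset.mul_sum, hr1 u hu, mul_one]
  -- the common value
  have key : a x * π x =
      ∑ v ∈ T, (if ∀ i, up v i ≤ x i then Φ (fun i => x i - up v i) else 0) *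
        ∏ i, w i ^ x i := by
    rw [hA, hπ, Finset.sum_mul]
    refine Finset.sum_congr rfl fun u _ => ?_
    rw [hqd, ← mul_assoc]
    congr 1
    by_cases h : ∀ i, up u i ≤ x i
    · rw [if_pos h, if_pos h, div_mul_cancel₀ _ (ne_of_gt (hΦ x))]
    · rw [if_neg h, if_neg h, zero_mul]
  rw [key]; symm
  -- Step B : compute the RHS tsum
  have hz2 : ∀ u u' (x' : Fin n → ℕ),
      x' ≠ (fun i => x i - up u' i + up u i) →
      π x' * (qd x' u * r u u' *
        (if x = fun i => x' i - up u i + up u' i then 1 else 0)) = 0 := by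
    intro u u' x' hne
    by_cases h1 : ∀ i, up u i ≤ x' i
    · by_cases h2 : x = fun i => x' i - up u i + up u' i
      · exfalso; apply hne; funext i
        have hx : x i = x' i - up u i + up u' i := congrFun h2 i
        rw [hx, Nat.add_sub_cancel, Nat.sub_add_cancel (h1 i)]
      · rw [if_neg h2]; ring
    · rw [hqd, if_neg h1]; ring
  have hrw : ∀ x' : Fin n → ℕ, π x' * q x' x =
      ∑ u ∈ T, ∑ u' ∈ T, π x' * (qd x' u * r u u' *
        (if x = fun i => x' i - up u i + up u' i then 1 else 0)) := by
    intro x'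
    rw [hq, Finset.mul_sum]
    exact Finset.sum_congr rfl fun u _ => Finset.mul_sum _ _ _
  calc ∑' x', π x' * q x' x
      = ∑ u ∈ T, ∑ u' ∈ T, π (fun i => x i - up u' i + up u i) *
          (qd (fun i => x i - up u' i + up u i) u * r u u' *
            (if x = fun i => (x i - up u' i + up u i) - up u i + up u' i then 1 else 0)) := by
        rw [tsum_congr hrw, Summable.tsum_finsetSum (fun u _ => summable_sum
          (fun u' _ => aux_summable_single _ _ (hz2 u u')))]
        refine Finset.sum_congr rfl fun u _ => ?_
        rw [Summable.tsum_finsetSum (fun u' _ => aux_summable_single _ _ (hz2 u u'))]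
        exact Finset.sum_congr rfl fun u' _ => aux_tsum_single _ _ (hz2 u u')
    _ = ∑ v ∈ T, (if ∀ i, up v i ≤ x i then Φ (fun i => x i - up v i) else 0) *
          ∏ i, w i ^ x i := by
        rw [Finset.sum_comm]
        refine Finset.sum_congr rfl fun u' hu' => ?_
        have hcond : ∀ u : Fin (n+1) → ℕ,
            (x = fun i => (x i - up u' i + up u i) - up u i + up u' i) ↔
            (∀ i, up u' i ≤ x i) := by
          intro u
          constructor
          · intro h i
            have := congrFun h i
            simp only [Nat.add_sub_cancel] at this
            omega
          · intro h; funext i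
            simp only [Nat.add_sub_cancel]
            have := h i
            omega
        have hqdval : ∀ u : Fin (n+1) → ℕ,
            qd (fun i => x i - up u' i + up u i) u =
            Φ (fun i => x i - up u' i) / Φ (fun i => x i - up u' i + up u i) := by
          intro u
          rw [hqd, if_pos (fun i => Nat.le_add_left _ _)]
          congr 1
          · congr 1; funext i; rw [Nat.add_sub_cancel]
        by_cases hle : ∀ i, up u' i ≤ x i
        · -- main case
          have hsum : ∀ u ∈ T, π (fun i => x i - up u' i + up u i) *
              (qd (fun i => x i - up u' i + up u i) u * r u u' *
                (if x = fun i => (x i - up u' i + up u i) - up u i + up u' i then 1 else 0)) =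
              (Φ (fun i => x i - up u' i) * (∏ i, w i ^ x i) / ν u') * (ν u * r u u') := by
            intro u _
            rw [if_pos ((hcond u).mpr hle), hqdval u, hπ]
            have hprod : (∏ i, w i ^ (x i - up u' i + up u i)) =
                (∏ i, w i ^ x i) * ν u / ν u' := by
              rw [eq_div_iff (ne_of_gt (hνpos u')), hν' u, hν' u']
              rw [← Finset.prod_mul_distrib, ← Finset.prod_mul_distrib]
              refine Finset.prod_congr rfl fun i _ => ?_
              rw [← pow_add, ← pow_add]
              congr 1
              have := hle i
              omega
            rw [hprod]
            have hΦ0 : (Φ fun i => x i - up u' i + up u i) ≠ 0 :=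
              ne_of_gt (hΦ _)
            have hν0 : ν u' ≠ 0 := ne_of_gt (hνpos u')
            field_simp
          rw [Finset.sum_congr rfl hsum, ← Finset.mul_sum, htraffic u' hu',
            div_mul_cancel₀ _ (ne_of_gt (hνpos u')), if_pos hle]
        · rw [if_neg hle, zero_mul]
          refine Finset.sum_eq_zero fun u _ => ?_
          rw [if_neg (fun h => hle ((hcond u).mp h))]
          ring
end
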